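/- Let Ψ be a positive diagonal q×q matrix and let Y = √2 AᵀΨ, U = √2 Ψ⁻¹B where AAᵀ + BBᵀ = I. Then 2Ψ² - YᵀY - Ψ²UUᵀΨ² = 0, and consequently the block matrix [[I, -UᵀΨ², 0], [-Ψ²U, 2Ψ², -Yᵀ], [0, -Y, I]] is positive semidefinite. -/

import Mathlib

open Matrix

theorem sandwich_identity_and_psd (q p : ℕ)
    (ψ : Fin q → ℝ) (hψ : ∀ i, 0 < ψ i)
    (A : Matrix (Fin q) (Fin q) ℝ) (B : Matrix (Fin q) (Fin p) ℝ)
    (hAB : A * Aᵀ + B * Bᵀ = 1)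
    (Ψ : Matrix (Fin q) (Fin q) ℝ) (hΨ : Ψ = Matrix.diagonal ψ)
    (Y : Matrix (Fin q) (Fin q) ℝ) (hY : Y = Real.sqrt 2 • (Aᵀ * Ψ))
    (U : Matrix (Fin q) (Fin p) ℝ) (hU : U = Real.sqrt 2 • (Ψ⁻¹ * B)) :
    2 • (Ψ * Ψ) - Yᵀ * Y - (Ψ * Ψ) * (U * Uᵀ) * (Ψ * Ψ) = 0 ∧
    (Matrix.fromBlocks
      (Matrix.fromBlocks (1 : Matrix (Fin p) (Fin p) ℝ) (-(Uᵀ * (Ψ * Ψ)))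
        (-((Ψ * Ψ) * U)) (2 • (Ψ * Ψ)))
      (Matrix.fromRows (0 : Matrix (Fin p) (Fin q) ℝ) (-Yᵀ))
      (Matrix.fromCols (0 : Matrix (Fin q) (Fin p) ℝ) (-Y))
      (1 : Matrix (Fin q) (Fin q) ℝ)).PosSemidef := by
  have hΨT : Ψᵀ = Ψ := by rw [hΨ]; exact Matrix.diagonal_transpose ψ
  have hinvT : (Ψ⁻¹)ᵀ = Ψ⁻¹ := by rw [Matrix.transpose_nonsing_inv, hΨT]
  have hΨinv : Ψ * Ψ⁻¹ = 1 := by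
    apply Matrix.mul_nonsing_inv
    rw [hΨ, Matrix.det_diagonal]
    exact isUnit_iff_ne_zero.mpr (Finset.prod_ne_zero_iff.mpr fun i _ => (hψ i).ne')
  have hinvΨ : Ψ⁻¹ * Ψ = 1 := by
    apply Matrix.nonsing_inv_mul
    rw [hΨ, Matrix.det_diagonal]
    exact isUnit_iff_ne_zero.mpr (Finset.prod_ne_zero_iff.mpr fun i _ => (hψ i).ne')
  have hs2 : Real.sqrt 2 * Real.sqrt 2 = 2 := Real.mul_self_sqrt (by norm_num)
  have key : Yᵀ * Y + (Ψ * Ψ) * (U * Uᵀ) * (Ψ * Ψ) = 2 • (Ψ * Ψ) := by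
    have h1 : Yᵀ * Y = (2:ℝ) • (Ψ * (A * Aᵀ) * Ψ) := by
      rw [hY, Matrix.transpose_smul, Matrix.transpose_mul, hΨT]
      rw [Matrix.smul_mul, Matrix.mul_smul, smul_smul, hs2]
      simp only [Matrix.transpose_transpose, Matrix.mul_assoc]
    have h2 : (Ψ * Ψ) * (U * Uᵀ) * (Ψ * Ψ) = (2:ℝ) • (Ψ * (B * Bᵀ) * Ψ) := by
      rw [hU, Matrix.transpose_smul, Matrix.transpose_mul, hinvT]
      simp only [Matrix.mul_smul, Matrix.smul_mul, smul_smul, hs2]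
      congr 1
      calc Ψ * Ψ * (Ψ⁻¹ * B * (Bᵀ * Ψ⁻¹)) * (Ψ * Ψ)
          = (Ψ * (Ψ * Ψ⁻¹)) * B * Bᵀ * ((Ψ⁻¹ * Ψ) * Ψ) := by
            simp only [Matrix.mul_assoc]
        _ = Ψ * (B * Bᵀ) * Ψ := by rw [hΨinv, hinvΨ, Matrix.mul_one, Matrix.one_mul]; simp only [Matrix.mul_assoc]
    rw [h1, h2, ← smul_add]
    simp only [Matrix.mul_assoc, ← Matrix.mul_add]
    have h3 : A * (Aᵀ * Ψ) + B * (Bᵀ * Ψ) = (A * Aᵀ + B * Bᵀ) * Ψ := by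
      rw [Matrix.add_mul]; simp only [Matrix.mul_assoc]
    rw [h3, hAB, Matrix.one_mul, two_smul, two_nsmul]
  constructor
  · rw [sub_sub, key, sub_self]
  · set L : Matrix (Fin p ⊕ Fin q) ((Fin p ⊕ Fin q) ⊕ Fin q) ℝ :=
      Matrix.fromCols
        (Matrix.fromBlocks (1 : Matrix (Fin p) (Fin p) ℝ) (-(Uᵀ * (Ψ * Ψ)))
          (0 : Matrix (Fin q) (Fin p) ℝ) (-Y))
        (Matrix.fromRows (0 : Matrix (Fin p) (Fin q) ℝ) (1 : Matrix (Fin q) (Fin q) ℝ))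
      with hL
    have hE : Matrix.fromBlocks
      (Matrix.fromBlocks (1 : Matrix (Fin p) (Fin p) ℝ) (-(Uᵀ * (Ψ * Ψ)))
        (-((Ψ * Ψ) * U)) (2 • (Ψ * Ψ)))
      (Matrix.fromRows (0 : Matrix (Fin p) (Fin q) ℝ) (-Yᵀ))
      (Matrix.fromCols (0 : Matrix (Fin q) (Fin p) ℝ) (-Y))
      (1 : Matrix (Fin q) (Fin q) ℝ) = Lᴴ * L := by
      rw [hL, Matrix.conjTranspose_eq_transpose_of_trivial, Matrix.transpose_fromCols,
        Matrix.fromRows_mul, Matrix.mul_fromCols, Matrix.mul_fromCols,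
        Matrix.fromRows_fromCols_eq_fromBlocks]
      simp only [Matrix.fromBlocks_transpose, Matrix.transpose_fromRows, Matrix.transpose_neg,
        Matrix.transpose_mul, Matrix.transpose_one, Matrix.transpose_zero,
        Matrix.transpose_transpose, hΨT, Matrix.fromBlocks_multiply,
        Matrix.fromBlocks_mul_fromRows, Matrix.fromCols_mul_fromBlocks,
        Matrix.fromCols_mul_fromRows,
        Matrix.mul_one, Matrix.one_mul, Matrix.mul_zero, Matrix.zero_mul,
        Matrix.neg_mul, Matrix.mul_neg, neg_neg, add_zero, zero_add, neg_zero]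
      have hblk : (Ψ * Ψ) * U * (Uᵀ * (Ψ * Ψ)) + Yᵀ * Y = 2 • (Ψ * Ψ) := by
        rw [← key, add_comm]
        congr 1
        simp only [Matrix.mul_assoc]
      rw [hblk]
    rw [hE]
    exact Matrix.posSemidef_conjTranspose_mul_self L
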